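/- A Set-functor admits a locally monotone extension to the category of sets and relations if and only if it preserves weak pullbacks, and in that case the locally monotone extension is unique and equals the Barr extension. -/

import Mathlib

open CategoryTheory

/-- Composition of relations (the definition `Rel.comp` of the older Mathlib). -/
def Rel.comp {α β γ : Type*} (r : Rel α β) (s : Rel β γ) : Rel α γ :=
  fun x z => ∃ y, r x y ∧ s y z

/-- The graph of a function, as a relation. -/
def graphRel {X Y : Type} (f : X → Y) : Rel X Y := fun x y => f x = y

/-- An extension of a `Set`-endofunctor `F` to the category of sets and relations:
an assignment on relations that preserves relational composition and agrees with `F`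
on (graphs of) functions. -/
structure RelExtension (F : Type ⥤ Type) where
  ext : ∀ {X Y : Type}, Rel X Y → Rel (F.obj X) (F.obj Y)
  ext_comp : ∀ {X Y Z : Type} (r : Rel X Y) (s : Rel Y Z),
    ext (r.comp s) = (ext r).comp (ext s)
  ext_fun : ∀ {X Y : Type} (f : X → Y), ext (graphRel f) = graphRel (F.map (TypeCat.ofHom f))
/-- A commuting square of functions is a weak pullback if every competing cone factors
through it (not necessarily uniquely). -/
def IsWeakPullback {A B C D : Type} (p : A → B) (q : A → C) (f : B → D) (g : C → D) : Prop :=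
  (∀ a, f (p a) = g (q a)) ∧ ∀ b c, f b = g c → ∃ a, p a = b ∧ q a = c

/-- A functor preserves weak pullbacks if it maps weak pullback squares to weak pullback
squares. -/
def PreservesWeakPullbacks (F : Type ⥤ Type) : Prop :=
  ∀ (A B C D : Type) (p : A → B) (q : A → C) (f : B → D) (g : C → D),
    IsWeakPullback p q f g → IsWeakPullback (F.map (TypeCat.ofHom p)) (F.map (TypeCat.ofHom q))
      (F.map (TypeCat.ofHom f)) (F.map (TypeCat.ofHom g))

/-- The Barr extension of a functor, defined via the canonical span factorization of a
relation. -/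
def barrExt (F : Type ⥤ Type) {X Y : Type} (r : Rel X Y) : Rel (F.obj X) (F.obj Y) :=
  fun a b => ∃ c : F.obj {p : X × Y // r p.1 p.2},
    F.map (TypeCat.ofHom (fun p : {p : X × Y // r p.1 p.2} => p.1.1)) c = a ∧
      F.map (TypeCat.ofHom (fun p : {p : X × Y // r p.1 p.2} => p.1.2)) c = b

/-- Local monotonicity of an extension. -/
def LocallyMonotone {F : Type ⥤ Type} (E : RelExtension F) : Prop :=
  ∀ (X Y : Type) (r s : Rel X Y), r ≤ s → E.ext r ≤ E.ext s

namespace Stmt8Aux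

/-- Converse of a relation. -/
def conv {X Y : Type} (r : Rel X Y) : Rel Y X := fun y x => r x y

lemma mm (F : Type ⥤ Type) {X Y Z : Type} (f : X → Y) (g : Y → Z) (x : F.obj X) :
    F.map (TypeCat.ofHom g) (F.map (TypeCat.ofHom f) x) = F.map (TypeCat.ofHom (fun a => g (f a))) x :=
  (FunctorToTypes.map_comp_apply F (TypeCat.ofHom f) (TypeCat.ofHom g) x).symm

lemma map_map_eq (F : Type ⥤ Type) {X Y Z : Type} (f : X → Y) (g : Y → Z) (h : X → Z)
    (hc : ∀ x, g (f x) = h x) (x : F.obj X) :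
    F.map (TypeCat.ofHom g) (F.map (TypeCat.ofHom f) x) = F.map (TypeCat.ofHom h) x := by
  rw [mm, show (fun a => g (f a)) = h from funext hc]

lemma mid (F : Type ⥤ Type) {X : Type} (x : F.obj X) : F.map (TypeCat.ofHom (fun a : X => a)) x = x := by
  exact FunctorToTypes.map_id_apply F x

lemma rel_le {X Y : Type} {r s : Rel X Y} (h : ∀ x y, r x y → s x y) : r ≤ s :=
  fun x => fun y hy => h x y hy

lemma ext_conv_fun {F : Type ⥤ Type} (E : RelExtension F) (hE : LocallyMonotone E)
    {X Y : Type} (f : X → Y) : E.ext (conv (graphRel f)) = conv (graphRel (F.map (TypeCat.ofHom f))) := by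
  have hid : ∀ (Z : Type), E.ext (graphRel (fun z : Z => z)) = graphRel (fun z : F.obj Z => z) := by
    intro Z
    rw [E.ext_fun]
    funext a b
    show (F.map (TypeCat.ofHom (fun z : Z => z)) a = b) = (a = b)
    rw [mid]
  have h1 : (graphRel (fun x : X => x)) ≤ (graphRel f).comp (conv (graphRel f)) := by
    apply rel_le; intro x x' h
    exact ⟨f x, rfl, show f x' = f x by rw [show x = x' from h]⟩
  have h2 : (conv (graphRel f)).comp (graphRel f) ≤ graphRel (fun y : Y => y) := by
    apply rel_le; rintro y y' ⟨x, hx, hx'⟩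
    show y = y'
    rw [← (hx : f x = y), (hx' : f x = y')]
  have H1 := hE _ _ _ _ h1
  have H2 := hE _ _ _ _ h2
  rw [hid, E.ext_comp, E.ext_fun] at H1
  rw [hid, E.ext_comp, E.ext_fun] at H2
  funext a b
  apply propext
  constructor
  · intro hs
    have hc : ((E.ext (conv (graphRel f))).comp (graphRel (F.map (TypeCat.ofHom f)))) a (F.map (TypeCat.ofHom f) b) :=
      ⟨b, hs, rfl⟩
    exact (H2 _ _ hc : a = F.map (TypeCat.ofHom f) b).symm
  · intro hb
    obtain ⟨y, hy1, hy2⟩ := H1 b b rfl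
    show E.ext (conv (graphRel f)) a b
    rw [← (hb : F.map (TypeCat.ofHom f) b = a), (hy1 : F.map (TypeCat.ofHom f) b = y)]
    exact hy2

lemma uniq {F : Type ⥤ Type} (E : RelExtension F) (hE : LocallyMonotone E)
    {X Y : Type} (r : Rel X Y) : E.ext r = barrExt F r := by
  have hdecomp : r = (conv (graphRel (fun p : {p : X × Y // r p.1 p.2} => p.1.1))).comp
      (graphRel (fun p : {p : X × Y // r p.1 p.2} => p.1.2)) := by
    funext x y
    apply propext
    constructor
    · intro h; exact ⟨⟨(x, y), h⟩, rfl, rfl⟩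
    · rintro ⟨⟨⟨x', y'⟩, h⟩, h1, h2⟩
      cases (h1 : x' = x); cases (h2 : y' = y); exact h
  have key : E.ext r = (conv (graphRel (F.map (TypeCat.ofHom (fun p : {p : X × Y // r p.1 p.2} => p.1.1))))).comp
      (graphRel (F.map (TypeCat.ofHom (fun p : {p : X × Y // r p.1 p.2} => p.1.2)))) := by
    conv_lhs => rw [hdecomp]
    rw [E.ext_comp, ext_conv_fun E hE, E.ext_fun]
  rw [key]
  funext a b
  apply propext
  constructor
  · rintro ⟨c, hc1, hc2⟩; exact ⟨c, hc1, hc2⟩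
  · rintro ⟨c, hc1, hc2⟩; exact ⟨c, hc1, hc2⟩

/-- From a locally monotone extension, weak pullback preservation. -/
lemma toPWP {F : Type ⥤ Type} (E : RelExtension F) (hE : LocallyMonotone E) :
    PreservesWeakPullbacks F := by
  intro A B C D p q f g ⟨hcomm, hfac⟩
  constructor
  · intro a
    have h : (fun x => f (p x)) = (fun x => g (q x)) := funext hcomm
    rw [mm F p f, mm F q g, h]
  · have hrel : (conv (graphRel p)).comp (graphRel q) = (graphRel f).comp (conv (graphRel g)) := by
      funext b c
      apply propext
      constructor
      · rintro ⟨a, ha1, ha2⟩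
        exact ⟨f b, rfl, show g c = f b by
          rw [← (ha1 : p a = b), ← (ha2 : q a = c)]; exact (hcomm a).symm⟩
      · rintro ⟨d, hd1, hd2⟩
        obtain ⟨a, ha1, ha2⟩ := hfac b c (by rw [(hd1 : f b = d), (hd2 : g c = d)])
        exact ⟨a, ha1, ha2⟩
    have heq := congrArg E.ext hrel
    rw [E.ext_comp, E.ext_comp, ext_conv_fun E hE, ext_conv_fun E hE, E.ext_fun, E.ext_fun] at heq
    intro b c hbc
    have hr : ((graphRel (F.map (TypeCat.ofHom f))).comp (conv (graphRel (F.map (TypeCat.ofHom g))))) b c :=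
      ⟨F.map (TypeCat.ofHom f) b, rfl, hbc.symm⟩
    rw [← heq] at hr
    obtain ⟨a, ha1, ha2⟩ := hr
    exact ⟨a, ha1, ha2⟩

/-- The Barr extension is a `RelExtension` when `F` preserves weak pullbacks. -/
noncomputable def barrRelExt (F : Type ⥤ Type) (hP : PreservesWeakPullbacks F) :
    RelExtension F where
  ext := barrExt F
  ext_fun := by
    intro X Y f
    funext a b
    apply propext
    constructor
    · rintro ⟨c, h1, h2⟩
      show F.map (TypeCat.ofHom f) a = b
      rw [← h1, ← h2]
      exact map_map_eq F _ f (fun p => p.1.2) (fun p => p.2) c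
    · intro h
      refine ⟨F.map (TypeCat.ofHom (fun x : X => (⟨(x, f x), rfl⟩ : {p : X × Y // graphRel f p.1 p.2}))) a, ?_, ?_⟩
      · refine (map_map_eq F _ _ (fun x : X => x) ?_ a).trans (mid F a)
        intro x; rfl
      · refine (map_map_eq F _ _ f ?_ a).trans h
        intro x; rfl
  ext_comp := by
    intro X Y Z r s
    funext a c
    apply propext
    constructor
    · rintro ⟨w, hw1, hw2⟩
      refine ⟨F.map (TypeCat.ofHom (fun t : {p : X × Z // (r.comp s) p.1 p.2} => Classical.choose t.2)) w,
        ⟨F.map (TypeCat.ofHom (fun t : {p : X × Z // (r.comp s) p.1 p.2} =>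
          (⟨(t.1.1, Classical.choose t.2), (Classical.choose_spec t.2).1⟩ :
            {p : X × Y // r p.1 p.2}))) w, ?_, ?_⟩,
        ⟨F.map (TypeCat.ofHom (fun t : {p : X × Z // (r.comp s) p.1 p.2} =>
          (⟨(Classical.choose t.2, t.1.2), (Classical.choose_spec t.2).2⟩ :
            {p : Y × Z // s p.1 p.2}))) w, ?_, ?_⟩⟩
      · refine (map_map_eq F _ _ (fun t => t.1.1) ?_ w).trans hw1
        intro t; rfl
      · refine map_map_eq F _ _ (fun t => Classical.choose t.2) ?_ w
        intro t; rfl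
      · refine map_map_eq F _ _ (fun t => Classical.choose t.2) ?_ w
        intro t; rfl
      · refine (map_map_eq F _ _ (fun t => t.1.2) ?_ w).trans hw2
        intro t; rfl
    · rintro ⟨b, ⟨u, hu1, hu2⟩, v, hv1, hv2⟩
      have hwpb : IsWeakPullback
          (fun w : {w : {p : X × Y // r p.1 p.2} × {p : Y × Z // s p.1 p.2} //
              w.1.1.2 = w.2.1.1} => w.1.1)
          (fun w => w.1.2)
          (fun u : {p : X × Y // r p.1 p.2} => u.1.2)
          (fun v : {p : Y × Z // s p.1 p.2} => v.1.1) :=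
        ⟨fun w => w.2, fun u v h => ⟨⟨(u, v), h⟩, rfl, rfl⟩⟩
      obtain ⟨w, hw1, hw2⟩ := (hP _ _ _ _ _ _ _ _ hwpb).2 u v (by rw [hu2, hv1])
      refine ⟨F.map (TypeCat.ofHom (fun w : {w : {p : X × Y // r p.1 p.2} × {p : Y × Z // s p.1 p.2} //
          w.1.1.2 = w.2.1.1} =>
        (⟨(w.1.1.1.1, w.1.2.1.2), w.1.1.1.2, w.1.1.2, w.2 ▸ w.1.2.2⟩ :
          {p : X × Z // (r.comp s) p.1 p.2}))) w, ?_, ?_⟩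
      · refine (map_map_eq F _ _ (fun w => w.1.1.1.1) ?_ w).trans ?_
        · intro t; rfl
        · rw [← hu1, ← hw1]
          refine (map_map_eq F _ _ (fun w => w.1.1.1.1) ?_ w).symm
          intro t; rfl
      · refine (map_map_eq F _ _ (fun w => w.1.2.1.2) ?_ w).trans ?_
        · intro t; rfl
        · rw [← hv2, ← hw2]
          refine (map_map_eq F _ _ (fun w => w.1.2.1.2) ?_ w).symm
          intro t; rfl

lemma barrMono (F : Type ⥤ Type) {X Y : Type} (r s : Rel X Y) (h : r ≤ s) :
    barrExt F r ≤ barrExt F s := by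
  apply rel_le
  rintro a b ⟨c, h1, h2⟩
  refine ⟨F.map (TypeCat.ofHom (fun p : {p : X × Y // r p.1 p.2} =>
    (⟨p.1, h _ _ p.2⟩ : {p : X × Y // s p.1 p.2}))) c, ?_, ?_⟩
  · refine (map_map_eq F _ _ (fun p => p.1.1) ?_ c).trans h1
    intro t; rfl
  · refine (map_map_eq F _ _ (fun p => p.1.2) ?_ c).trans h2
    intro t; rfl

end Stmt8Aux

theorem stmt8 (F : Type ⥤ Type) :
    ((∃ E : RelExtension F, LocallyMonotone E) ↔ PreservesWeakPullbacks F) ∧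
    (∀ E : RelExtension F, LocallyMonotone E →
      ∀ (X Y : Type) (r : Rel X Y), E.ext r = barrExt F r) := by
  constructor
  · constructor
    · rintro ⟨E, hE⟩
      exact Stmt8Aux.toPWP E hE
    · intro hP
      exact ⟨Stmt8Aux.barrRelExt F hP, fun X Y r s h => Stmt8Aux.barrMono F r s h⟩
  · intro E hE X Y r
    exact Stmt8Aux.uniq E hE r
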